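/- Let c ≥ 1 and M > 0 be reals, and let X_{ij}, for i = 1,…,r and j = 1,…,ℓ, be i.i.d. real-valued random variables with mean μ ≥ 0 and Var[X_{11}] ≤ c·μ·max{μ, M}. Let 0 < ε < 1 and 0 < δ < 1. If r ≥ 28·ln(1/δ) and ℓ ≥ 4·c·ε^{-2}, then Pr[ | Median_{i∈[r]} ( (1/ℓ) Σ_{j=1}^ℓ X_{ij} ) − μ | ≥ ε·max{μ, M} ] ≤ δ. -/

import Mathlib

open MeasureTheory ProbabilityTheory

/-- Median of `r` reals: the `⌈r/2⌉`-th smallest value. -/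
noncomputable def medianR {r : ℕ} (y : Fin r → ℝ) : ℝ :=
  ((List.ofFn y).mergeSort (fun a b => a ≤ b)).getD ((r + 1) / 2 - 1) 0

lemma countP_finRange {r : ℕ} (q : Fin r → Prop) [DecidablePred q] :
    (List.finRange r).countP (fun i => decide (q i)) = (Finset.univ.filter q).card := by
  rw [Finset.card, Finset.filter_val, Fin.univ_def]
  simp only [Multiset.filter_coe, Multiset.coe_card]
  rw [List.countP_eq_length_filter]

lemma countP_ofFn {r : ℕ} (y : Fin r → ℝ) (q : ℝ → Prop) [DecidablePred q] :
    (List.ofFn y).countP (fun x => decide (q x)) =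
      (Finset.univ.filter (fun i => q (y i))).card := by
  rw [List.ofFn_eq_map, List.countP_map]
  exact countP_finRange (fun i => q (y i))

lemma sorted_countP_le {l : List ℝ} (hs : l.Pairwise (· ≤ ·)) {k : ℕ} (hk : k < l.length) :
    k + 1 ≤ l.countP (fun x => decide (x ≤ l.getD k 0)) := by
  have hget : l.getD k 0 = l[k] := List.getD_eq_getElem l 0 hk
  have hall : ∀ x ∈ l.take (k+1), x ≤ l.getD k 0 := by
    intro x hx
    rw [List.mem_iff_getElem] at hx
    obtain ⟨j, hj, rfl⟩ := hx
    have hjl : j < l.length := lt_of_lt_of_le hj (by simp [List.length_take])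
    have hjk : j ≤ k := by simp [List.length_take] at hj; omega
    rw [List.getElem_take, hget]
    rcases eq_or_lt_of_le hjk with h | h
    · subst h; rfl
    · exact (List.pairwise_iff_getElem.mp hs) j k hjl hk h
  have h1 : (l.take (k+1)).countP (fun x => decide (x ≤ l.getD k 0)) = (l.take (k+1)).length :=
    List.countP_eq_length.mpr (fun a ha => decide_eq_true (hall a ha))
  have h2 : l.countP (fun x => decide (x ≤ l.getD k 0)) =
      (l.take (k+1)).countP (fun x => decide (x ≤ l.getD k 0)) + (l.drop (k+1)).countP (fun x => decide (x ≤ l.getD k 0)) := by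
    rw [← List.countP_append, List.take_append_drop]
  have h3 : (l.take (k+1)).length = k + 1 := by simp [List.length_take]; omega
  omega

lemma sorted_countP_ge {l : List ℝ} (hs : l.Pairwise (· ≤ ·)) {k : ℕ} (hk : k < l.length) :
    l.length - k ≤ l.countP (fun x => decide (l.getD k 0 ≤ x)) := by
  have hget : l.getD k 0 = l[k] := List.getD_eq_getElem l 0 hk
  have hall : ∀ x ∈ l.drop k, l.getD k 0 ≤ x := by
    intro x hx
    rw [List.mem_iff_getElem] at hx
    obtain ⟨j, hj, rfl⟩ := hx
    have hjl : k + j < l.length := by simp [List.length_drop] at hj; omega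
    rw [List.getElem_drop, hget]
    rcases Nat.eq_zero_or_pos j with h | h
    · subst h; simp
    · exact (List.pairwise_iff_getElem.mp hs) k (k+j) hk hjl (by omega)
  have h1 : (l.drop k).countP (fun x => decide (l.getD k 0 ≤ x)) = (l.drop k).length :=
    List.countP_eq_length.mpr (fun a ha => decide_eq_true (hall a ha))
  have h2 : l.countP (fun x => decide (l.getD k 0 ≤ x)) =
      (l.take k).countP (fun x => decide (l.getD k 0 ≤ x)) + (l.drop k).countP (fun x => decide (l.getD k 0 ≤ x)) := by
    rw [← List.countP_append, List.take_append_drop]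
  have h3 : (l.drop k).length = l.length - k := by simp [List.length_drop]
  omega

lemma median_count {r : ℕ} (y : Fin r → ℝ) (a t : ℝ) (hr : r ≠ 0)
    (h : t ≤ |medianR y - a|) :
    (r : ℝ) ≤ 2 * ((Finset.univ.filter (fun i => t ≤ |y i - a|)).card : ℝ) := by
  classical
  set l := (List.ofFn y).mergeSort (fun a b => a ≤ b) with hl
  have hlen : l.length = r := by
    rw [hl, List.length_mergeSort, List.length_ofFn]
  have hsort : l.Pairwise (· ≤ ·) := List.pairwise_mergeSort' _ _
  have hperm : l.Perm (List.ofFn y) := List.mergeSort_perm (List.ofFn y) _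
  set k := (r + 1) / 2 - 1 with hkdef
  have hk : k < l.length := by rw [hlen]; omega
  have hmed : medianR y = l.getD k 0 := rfl
  set med := l.getD k 0 with hmeddef
  rw [hmed] at h
  rcases le_abs.mp h with h1 | h1
  · -- med ≥ a + t : at least r - k indices with med ≤ y i
    have hsub : (Finset.univ.filter (fun i => med ≤ y i)) ⊆
        (Finset.univ.filter (fun i => t ≤ |y i - a|)) := by
      apply Finset.monotone_filter_right
      intro i _ hi
      have : t ≤ y i - a := by linarith
      exact le_trans this (le_abs_self _)
    have hcount : r - k ≤ (Finset.univ.filter (fun i => med ≤ y i)).card := by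
      rw [← countP_ofFn y (fun x => med ≤ x), ← hperm.countP_eq]
      have := sorted_countP_ge hsort hk
      rw [← hmeddef] at this
      omega
    have := Finset.card_le_card hsub
    have hnat : r ≤ 2 * (Finset.univ.filter (fun i => t ≤ |y i - a|)).card := by omega
    exact_mod_cast hnat
  · -- med ≤ a - t
    have h1' : med - a ≤ -t := by linarith
    have hsub : (Finset.univ.filter (fun i => y i ≤ med)) ⊆
        (Finset.univ.filter (fun i => t ≤ |y i - a|)) := by
      apply Finset.monotone_filter_right
      intro i _ hi
      have : t ≤ -(y i - a) := by linarith
      exact le_trans this (neg_le_abs _)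
    have hcount : k + 1 ≤ (Finset.univ.filter (fun i => y i ≤ med)).card := by
      rw [← countP_ofFn y (fun x => x ≤ med), ← hperm.countP_eq]
      have := sorted_countP_le hsort hk
      rw [← hmeddef] at this
      omega
    have := Finset.card_le_card hsub
    have hnat : r ≤ 2 * (Finset.univ.filter (fun i => t ≤ |y i - a|)).card := by omega
    exact_mod_cast hnat

/-- **Median-of-averages guarantee (abstract form).**  If the `X_{ij}` are i.i.d. with
mean `μ ≥ 0` and `Var[X_{11}] ≤ c·μ·max{μ,M}`, and `r ≥ 28·ln(1/δ)`, `ℓ ≥ 4·c·ε⁻²`,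
then the median over `i` of the averages over `j` deviates from `μ` by at least
`ε·max{μ,M}` with probability at most `δ`. -/
theorem median_of_averages {Ω : Type*} [MeasureSpace Ω] [IsProbabilityMeasure (ℙ : Measure Ω)]
    (c M μ ε δ : ℝ) (hc : 1 ≤ c) (hM : 0 < M) (hμ : 0 ≤ μ)
    (hε0 : 0 < ε) (hε1 : ε < 1) (hδ0 : 0 < δ) (hδ1 : δ < 1)
    (r ℓ : ℕ) (hr : (r : ℝ) ≥ 28 * Real.log (1 / δ)) (hℓ : (ℓ : ℝ) ≥ 4 * c / ε ^ 2)
    (X : Fin r × Fin ℓ → Ω → ℝ)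
    (hmeas : ∀ ij, Measurable (X ij))
    (hL2 : ∀ ij, MemLp (X ij) 2 ℙ)
    (hindep : iIndepFun X ℙ)
    (hident : ∀ ij ij', IdentDistrib (X ij) (X ij') ℙ ℙ)
    (hmean : ∀ ij, ∫ ω, X ij ω ∂ℙ = μ)
    (hvar : ∀ ij, variance (X ij) ℙ ≤ c * μ * max μ M) :
    ℙ {ω | ε * max μ M ≤
        |medianR (fun i => (1 / (ℓ : ℝ)) * ∑ j, X (i, j) ω) - μ|} ≤ ENNReal.ofReal δ := by
  classical
  set m := max μ M with hmdef
  have hm0 : 0 < m := lt_of_lt_of_le hM (le_max_right μ M)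
  have hμm : μ ≤ m := le_max_left μ M
  set t := ε * m with htdef
  have ht : 0 < t := mul_pos hε0 hm0
  have hc0 : 0 < c := lt_of_lt_of_le one_pos hc
  have hℓ0 : 0 < (ℓ : ℝ) := lt_of_lt_of_le (by positivity) hℓ
  have hr0 : r ≠ 0 := by
    have hlog : 0 < Real.log (1 / δ) := Real.log_pos (one_lt_one_div hδ0 hδ1)
    have : (0 : ℝ) < r := lt_of_lt_of_le (by linarith) hr
    exact_mod_cast Nat.pos_of_ne_zero (fun h => by simp [h] at this) |>.ne'
  -- the real-valued test function
  set g : ℝ → ℝ := fun x => if t ≤ |(1 / (ℓ : ℝ)) * x - μ| then 2 else 1 with hgdef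
  have hgmeas : Measurable g := by
    apply Measurable.ite _ measurable_const measurable_const
    exact measurableSet_le measurable_const
      (((measurable_id.const_mul _).sub_const _).abs)
  set W : Fin r → Ω → ℝ := fun i ω => g ((∑ j, X (i, j) ω)) with hWdef
  have hWmeas : ∀ i, Measurable (W i) :=
    fun i => hgmeas.comp (Finset.measurable_sum Finset.univ (fun j _ => hmeas (i, j)))
  have hW1 : ∀ i ω, 1 ≤ W i ω := by
    intro i ω; rw [hWdef]; simp only [hgdef]; split <;> norm_num
  have hW2 : ∀ i ω, W i ω ≤ 2 := by
    intro i ω; rw [hWdef]; simp only [hgdef]; split <;> norm_num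
  have hWint : ∀ i, Integrable (W i) ℙ := by
    intro i
    refine (integrable_const (2 : ℝ)).mono' (hWmeas i).aestronglyMeasurable ?_
    refine Filter.Eventually.of_forall (fun ω => ?_)
    rw [Real.norm_eq_abs, abs_of_nonneg (by linarith [hW1 i ω])]
    exact hW2 i ω
  -- Step 1: each E[W i] ≤ 5/4
  have hEW : ∀ i, ∫ ω, W i ω ∂ℙ ≤ 5 / 4 := by
    intro i
    -- the sum as a function-level sum
    set Sf : Ω → ℝ := ∑ j ∈ Finset.univ, X (i, j) with hSfdef
    have hSfa : ∀ ω, Sf ω = ∑ j, X (i, j) ω := fun ω => by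
      rw [hSfdef]; exact Finset.sum_apply ω Finset.univ _
    have hSf2 : MemLp Sf 2 ℙ := memLp_finset_sum' _ (fun j _ => hL2 (i, j))
    have hES : ∫ ω, Sf ω ∂ℙ = (ℓ : ℝ) * μ := by
      simp only [hSfdef, Finset.sum_apply]
      rw [integral_finset_sum _ (fun j _ => ((hL2 (i, j)).integrable one_le_two))]
      simp [hmean, Finset.sum_const, nsmul_eq_mul]
    have hVarS : variance Sf ℙ ≤ (ℓ : ℝ) * (c * μ * m) := by
      rw [hSfdef, IndepFun.variance_sum (fun j _ => hL2 (i, j))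
        (fun j _ j' _ hne => hindep.indepFun (by simp [Prod.ext_iff, hne]))]
      calc ∑ j : Fin ℓ, variance (X (i, j)) ℙ ≤ ∑ _j : Fin ℓ, c * μ * m :=
            Finset.sum_le_sum (fun j _ => hvar (i, j))
        _ = (ℓ : ℝ) * (c * μ * m) := by simp [Finset.sum_const, nsmul_eq_mul]
    have hcheb := meas_ge_le_variance_div_sq (μ := ℙ) hSf2 (mul_pos ht hℓ0)
    rw [hES] at hcheb
    have hseteq : {ω | t * ℓ ≤ |Sf ω - (ℓ : ℝ) * μ|} =
        {ω | t ≤ |(1 / (ℓ : ℝ)) * (∑ j, X (i, j) ω) - μ|} := by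
      ext ω
      simp only [Set.mem_setOf_eq, ← hSfa ω]
      have heq : (1 / (ℓ : ℝ)) * Sf ω - μ = (Sf ω - (ℓ : ℝ) * μ) / ℓ := by
        field_simp
      rw [heq, abs_div, abs_of_pos hℓ0, le_div_iff₀ hℓ0]
    rw [hseteq] at hcheb
    have hnum : variance Sf ℙ / (t * ℓ) ^ 2 ≤ 1 / 4 := by
      rw [div_le_iff₀ (by positivity)]
      have h4c : 4 * c ≤ ε ^ 2 * ℓ := by
        rw [ge_iff_le, div_le_iff₀ (by positivity)] at hℓ
        linarith [hℓ]
      have f1 : 4 * c * (m ^ 2 * ℓ) ≤ ε ^ 2 * ℓ * (m ^ 2 * ℓ) :=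
        mul_le_mul_of_nonneg_right h4c (by positivity)
      have f2 : c * μ * (m * ℓ) ≤ c * m * (m * ℓ) :=
        mul_le_mul_of_nonneg_right (mul_le_mul_of_nonneg_left hμm hc0.le) (by positivity)
      have := hVarS
      rw [htdef]
      nlinarith [f1, f2]
    -- E[W i] = 1 + P(A i)
    have hWind : ∀ ω, W i ω = 1 +
        Set.indicator {ω | t ≤ |(1 / (ℓ : ℝ)) * (∑ j, X (i, j) ω) - μ|} (fun _ => (1:ℝ)) ω := by
      intro ω
      rw [hWdef]; simp only [hgdef, Set.indicator_apply, Set.mem_setOf_eq]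
      split_ifs with h1 h2 <;> first | norm_num | (exfalso; tauto)
    have hAmeas : MeasurableSet {ω | t ≤ |(1 / (ℓ : ℝ)) * (∑ j, X (i, j) ω) - μ|} := by
      apply measurableSet_le measurable_const
      exact (((Finset.measurable_sum Finset.univ (fun j _ => hmeas (i, j))).const_mul
        _).sub_const _).abs
    have hEcalc : ∫ ω, W i ω ∂ℙ = 1 +
        (ℙ {ω | t ≤ |(1 / (ℓ : ℝ)) * (∑ j, X (i, j) ω) - μ|}).toReal := by
      rw [integral_congr_ae (Filter.Eventually.of_forall hWind)]
      rw [integral_add (integrable_const 1)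
        ((integrable_const (1:ℝ)).indicator hAmeas)]
      rw [integral_indicator_const _ hAmeas]
      simp [measureReal_def]
    rw [hEcalc]
    have hPA : (ℙ {ω | t ≤ |(1 / (ℓ : ℝ)) * (∑ j, X (i, j) ω) - μ|}).toReal ≤ 1 / 4 := by
      have hle := le_trans hcheb (ENNReal.ofReal_le_ofReal hnum)
      have := ENNReal.toReal_mono (by simp) hle
      rw [ENNReal.toReal_ofReal (by norm_num)] at this
      exact this
    linarith
  -- Step 2: expectation of products factorizes
  have hprod : ∀ s : Finset (Fin r),
      ∫ ω, ∏ i ∈ s, W i ω ∂ℙ = ∏ i ∈ s, ∫ ω, W i ω ∂ℙ := by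
    intro s
    induction s using Finset.induction_on with
    | empty => simp
    | insert k s hks ih =>
      have hd : Disjoint (s ×ˢ (Finset.univ : Finset (Fin ℓ)))
          ({k} ×ˢ (Finset.univ : Finset (Fin ℓ))) := by
        rw [Finset.disjoint_left]
        rintro ⟨a, b⟩ hab hab'
        simp only [Finset.mem_product, Finset.mem_singleton] at hab hab'
        exact hks (hab'.1 ▸ hab.1)
      have hbig := hindep.indepFun_finset _ _ hd hmeas
      set G : ((↥(s ×ˢ (Finset.univ : Finset (Fin ℓ)))) → ℝ) → ℝ :=
        fun v => ∏ i ∈ s.attach, g (∑ j, v ⟨(i.1, j), Finset.mem_product.mpr ⟨i.2, Finset.mem_univ j⟩⟩) with hGdef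
      set H : ((↥({k} ×ˢ (Finset.univ : Finset (Fin ℓ)))) → ℝ) → ℝ :=
        fun v => g (∑ j, v ⟨(k, j), Finset.mem_product.mpr ⟨Finset.mem_singleton_self k, Finset.mem_univ j⟩⟩) with hHdef
      have hG : Measurable G :=
        Finset.measurable_prod _ (fun i _ => hgmeas.comp
          (Finset.measurable_sum Finset.univ (fun j _ => measurable_pi_apply _)))
      have hH : Measurable H :=
        hgmeas.comp (Finset.measurable_sum Finset.univ (fun j _ => measurable_pi_apply _))
      have hindepWk : IndepFun (fun ω => ∏ i ∈ s, W i ω) (W k) ℙ := by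
        have := hbig.comp hG hH
        have e1 : (G ∘ fun ω (ij : ↥(s ×ˢ (Finset.univ : Finset (Fin ℓ)))) => X ij ω)
            = fun ω => ∏ i ∈ s, W i ω := by
          funext ω
          simp only [Function.comp_apply, hGdef]
          rw [← Finset.prod_attach s (fun i => W i ω)]
        have e2 : (H ∘ fun ω (ij : ↥({k} ×ˢ (Finset.univ : Finset (Fin ℓ)))) => X ij ω)
            = W k := by
          funext ω
          simp only [Function.comp_apply, hHdef]
          rfl
        rwa [e1, e2] at this
      rw [Finset.prod_insert hks]
      have heq : ∀ ω, ∏ i ∈ insert k s, W i ω = W k ω * ∏ i ∈ s, W i ω :=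
        fun ω => Finset.prod_insert hks
      rw [integral_congr_ae (Filter.Eventually.of_forall heq)]
      rw [hindepWk.symm.integral_fun_mul_eq_mul_integral (hWmeas k).aestronglyMeasurable
        (Finset.measurable_prod s (fun i _ => hWmeas i)).aestronglyMeasurable]
      rw [ih]
  -- Step 3: the event is contained in a product-threshold event
  set B : Set Ω := {ω | Real.sqrt 2 ^ r ≤ ∏ i, W i ω} with hBdef
  have hsub : {ω | t ≤ |medianR (fun i => (1 / (ℓ : ℝ)) * ∑ j, X (i, j) ω) - μ|} ⊆ B := by
    intro ω hω
    simp only [Set.mem_setOf_eq] at hω ⊢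
    have hcount := median_count (fun i => (1 / (ℓ : ℝ)) * ∑ j, X (i, j) ω) μ t hr0 hω
    set K := (Finset.univ.filter
      (fun i => t ≤ |(1 / (ℓ : ℝ)) * ∑ j, X (i, j) ω - μ|)).card with hKdef
    have hprodval : ∏ i, W i ω = 2 ^ K := by
      rw [hKdef]
      have : ∀ i : Fin r, W i ω =
          if t ≤ |(1 / (ℓ : ℝ)) * ∑ j, X (i, j) ω - μ| then (2:ℝ) else 1 := fun i => rfl
      simp only [this]
      rw [Finset.prod_ite]
      simp [Finset.prod_const]
    have hrK : r ≤ 2 * K := by exact_mod_cast hcount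
    rw [hBdef, Set.mem_setOf_eq, hprodval]
    calc Real.sqrt 2 ^ r ≤ Real.sqrt 2 ^ (2 * K) :=
          pow_le_pow_right₀ (Real.one_le_sqrt.mpr one_le_two) hrK
      _ = 2 ^ K := by
          rw [pow_mul, Real.sq_sqrt (by norm_num : (0:ℝ) ≤ 2)]
  -- Markov on the product
  have hPint : Integrable (fun ω => ∏ i, W i ω) ℙ := by
    refine (integrable_const ((2:ℝ) ^ r)).mono'
      (Finset.measurable_prod Finset.univ (fun i _ => hWmeas i)).aestronglyMeasurable ?_
    refine Filter.Eventually.of_forall (fun ω => ?_)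
    rw [Real.norm_eq_abs, abs_of_nonneg (Finset.prod_nonneg (fun i _ => by linarith [hW1 i ω]))]
    calc ∏ i, W i ω ≤ ∏ _i : Fin r, (2:ℝ) :=
          Finset.prod_le_prod (fun i _ => by linarith [hW1 i ω]) (fun i _ => hW2 i ω)
      _ = 2 ^ r := by simp
  have hmarkov := mul_meas_ge_le_integral_of_nonneg
    (Filter.Eventually.of_forall (fun ω =>
      Finset.prod_nonneg (fun i (_ : i ∈ Finset.univ) => le_trans zero_le_one (hW1 i ω))))
    hPint (Real.sqrt 2 ^ r)
  have hint_le : ∫ ω, ∏ i, W i ω ∂ℙ ≤ (5/4) ^ r := by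
    rw [hprod Finset.univ]
    calc ∏ i, ∫ ω, W i ω ∂ℙ ≤ ∏ _i : Fin r, (5/4 : ℝ) :=
          Finset.prod_le_prod (fun i _ => integral_nonneg (fun ω => le_trans zero_le_one (hW1 i ω)))
            (fun i _ => hEW i)
      _ = (5/4) ^ r := by simp [div_pow]
  -- numeric endgame
  have hsqrt2 : (0:ℝ) < Real.sqrt 2 ^ r := by positivity
  have hPB : (ℙ B).toReal ≤ (5/4) ^ r / Real.sqrt 2 ^ r := by
    rw [le_div_iff₀ hsqrt2]
    calc (ℙ B).toReal * Real.sqrt 2 ^ r = Real.sqrt 2 ^ r * (ℙ B).toReal := by ring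
      _ ≤ ∫ ω, ∏ i, W i ω ∂ℙ := hmarkov
      _ ≤ (5/4) ^ r := hint_le
  have hnum2 : (5/4 : ℝ) ^ r / Real.sqrt 2 ^ r ≤ δ := by
    rw [div_le_iff₀ hsqrt2]
    have hδexp : Real.exp (-(r:ℝ)/28) ≤ δ := by
      have hlog : Real.log (1/δ) ≤ (r:ℝ)/28 := by linarith
      have h1δ : 1/δ ≤ Real.exp ((r:ℝ)/28) :=
        (Real.log_le_iff_le_exp (by positivity)).mp hlog
      have h2 : Real.exp (-(r:ℝ)/28) = 1 / Real.exp ((r:ℝ)/28) := by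
        rw [neg_div, Real.exp_neg, one_div]
      have h3 : 1 / Real.exp ((r:ℝ)/28) ≤ 1 / (1/δ) :=
        one_div_le_one_div_of_le (by positivity) h1δ
      rw [one_div_one_div] at h3
      rw [h2]; exact h3
    have hbase : (5/4 : ℝ) ≤ Real.exp (-(1:ℝ)/28) * Real.sqrt 2 := by
      have he : 27/28 ≤ Real.exp (-(1:ℝ)/28) := by
        have := Real.add_one_le_exp (-(1:ℝ)/28); linarith
      have hs : (1.41:ℝ) ≤ Real.sqrt 2 := by
        rw [show (1.41:ℝ) = Real.sqrt (1.41^2) from (Real.sqrt_sq (by norm_num)).symm]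
        exact Real.sqrt_le_sqrt (by norm_num)
      nlinarith [Real.exp_pos (-(1:ℝ)/28)]
    calc (5/4:ℝ)^r ≤ (Real.exp (-(1:ℝ)/28) * Real.sqrt 2)^r :=
          pow_le_pow_left₀ (by norm_num) hbase r
      _ = Real.exp ((r:ℝ) * (-(1:ℝ)/28)) * Real.sqrt 2 ^ r := by
          rw [mul_pow, ← Real.exp_nat_mul]
      _ = Real.exp (-(r:ℝ)/28) * Real.sqrt 2 ^ r := by
          rw [show (r:ℝ) * (-(1:ℝ)/28) = -(r:ℝ)/28 by ring]
      _ ≤ δ * Real.sqrt 2 ^ r := mul_le_mul_of_nonneg_right hδexp (by positivity)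
  calc ℙ _ ≤ ℙ B := measure_mono hsub
    _ = ENNReal.ofReal ((ℙ B).toReal) := (ENNReal.ofReal_toReal (measure_ne_top _ _)).symm
    _ ≤ ENNReal.ofReal δ := ENNReal.ofReal_le_ofReal (le_trans hPB hnum2)
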